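/- Let Ã ∈ ℝ^{m×n} with columns ã_j, and suppose Ã + ΔÃ = Q R̂, where Q ∈ ℝ^{m×m} is orthogonal, R̂ ∈ ℝ^{m×n}, and ‖ΔÃ e_j‖₂ ≤ γ‖Ã e_j‖₂ for every column index j, with 0 ≤ γ ≤ 1. Then off(R̂ᵀR̂) ≤ off(ÃᵀÃ) + 3n^{3/2}·γ·‖ÃᵀÃ‖_F. -/

import Mathlib

open scoped BigOperators
open Matrix

/-- Euclidean norm of a vector in `ℝ^m`. -/
noncomputable def vecNorm {m : ℕ} (v : Fin m → ℝ) : ℝ :=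
  Real.sqrt (∑ i, v i ^ 2)

/-- The `k`-th largest singular value of a real `m × n` matrix
(`k = 0` gives the largest). -/
noncomputable def sval {m n : ℕ} (A : Matrix (Fin m) (Fin n) ℝ) (k : Fin n) : ℝ :=
  Real.sqrt
    (((Matrix.isHermitian_conjTranspose_mul_self A).eigenvalues ∘
      Tuple.sort (Matrix.isHermitian_conjTranspose_mul_self A).eigenvalues) k.rev)

/-- Spectral norm: the largest singular value. -/
noncomputable def specNorm {m n : ℕ} (A : Matrix (Fin m) (Fin n) ℝ) : ℝ :=
  ⨆ k, sval A k

/-- Smallest singular value. -/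
noncomputable def sMin {m n : ℕ} (A : Matrix (Fin m) (Fin n) ℝ) : ℝ :=
  ⨅ k, sval A k

/-- Frobenius norm. -/
noncomputable def frobNorm {m n : ℕ} (A : Matrix (Fin m) (Fin n) ℝ) : ℝ :=
  Real.sqrt (∑ i, ∑ j, (A i j) ^ 2)

/-- Frobenius norm of the off-diagonal part of a square matrix. -/
noncomputable def offF {n : ℕ} (M : Matrix (Fin n) (Fin n) ℝ) : ℝ :=
  frobNorm (M - Matrix.diagonal (fun i => M i i))

/-- Diagonal matrix of inverse column norms `D(A)`. -/
noncomputable def colScale {m n : ℕ} (A : Matrix (Fin m) (Fin n) ℝ) :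
    Matrix (Fin n) (Fin n) ℝ :=
  Matrix.diagonal (fun j => (vecNorm (fun i => A i j))⁻¹)

/-- Condition number `κ₂(A) = σ_max(A) / σ_min(A)`. -/
noncomputable def kappa2 {m n : ℕ} (A : Matrix (Fin m) (Fin n) ℝ) : ℝ :=
  specNorm A / sMin A

/-- One-sided scaled condition number `κ₂ᴰ(A) = κ₂(A · D(A))`. -/
noncomputable def scaledCond {m n : ℕ} (A : Matrix (Fin m) (Fin n) ℝ) : ℝ :=
  kappa2 (A * colScale A)

/-- Entrywise absolute value of a matrix. -/
def matAbs {m n : ℕ} (A : Matrix (Fin m) (Fin n) ℝ) : Matrix (Fin m) (Fin n) ℝ :=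
  fun i j => |A i j|

private lemma vecNorm_nonneg' {m : ℕ} (v : Fin m → ℝ) : 0 ≤ vecNorm v := Real.sqrt_nonneg _

private lemma vecNorm_sq' {m : ℕ} (v : Fin m → ℝ) : vecNorm v ^ 2 = ∑ i, v i ^ 2 := by
  rw [vecNorm, Real.sq_sqrt (by positivity)]

private lemma abs_sum_mul_le' {m : ℕ} (u v : Fin m → ℝ) :
    |∑ i, u i * v i| ≤ vecNorm u * vecNorm v := by
  have h := Finset.sum_mul_sq_le_sq_mul_sq Finset.univ u v
  rw [vecNorm, vecNorm, ← Real.sqrt_mul (by positivity)]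
  calc |∑ i, u i * v i| = Real.sqrt ((∑ i, u i * v i) ^ 2) := (Real.sqrt_sq_eq_abs _).symm
    _ ≤ _ := Real.sqrt_le_sqrt h

private lemma frobNorm_nonneg' {m n : ℕ} (A : Matrix (Fin m) (Fin n) ℝ) : 0 ≤ frobNorm A :=
  Real.sqrt_nonneg _

private lemma frobNorm_eq_norm' {m n : ℕ} (A : Matrix (Fin m) (Fin n) ℝ) :
    frobNorm A = ‖((WithLp.equiv 2 (Fin m × Fin n → ℝ)).symm (fun p => A p.1 p.2))‖ := by
  rw [frobNorm, EuclideanSpace.norm_eq]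
  congr 1
  rw [Fintype.sum_prod_type]
  simp [Real.norm_eq_abs, sq_abs]

private lemma frobNorm_add_le' {m n : ℕ} (A B : Matrix (Fin m) (Fin n) ℝ) :
    frobNorm (A + B) ≤ frobNorm A + frobNorm B := by
  rw [frobNorm_eq_norm', frobNorm_eq_norm', frobNorm_eq_norm']
  have h : ((WithLp.equiv 2 (Fin m × Fin n → ℝ)).symm (fun p => (A + B) p.1 p.2))
      = ((WithLp.equiv 2 (Fin m × Fin n → ℝ)).symm (fun p => A p.1 p.2))
        + ((WithLp.equiv 2 (Fin m × Fin n → ℝ)).symm (fun p => B p.1 p.2)) := rfl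
  rw [h]
  exact norm_add_le _ _

private lemma frobNorm_le_sqrt' {m n : ℕ} (A : Matrix (Fin m) (Fin n) ℝ) (B : Fin m → Fin n → ℝ)
    (h : ∀ i j, |A i j| ≤ B i j) : frobNorm A ≤ Real.sqrt (∑ i, ∑ j, B i j ^ 2) := by
  apply Real.sqrt_le_sqrt
  apply Finset.sum_le_sum; intro i _
  apply Finset.sum_le_sum; intro j _
  calc (A i j) ^ 2 = |A i j| ^ 2 := (sq_abs _).symm
    _ ≤ (B i j) ^ 2 := by
        have := h i j
        nlinarith [abs_nonneg (A i j)]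

private lemma offF_le_frobNorm' {n : ℕ} (E : Matrix (Fin n) (Fin n) ℝ) : offF E ≤ frobNorm E := by
  rw [offF, frobNorm, frobNorm]
  apply Real.sqrt_le_sqrt
  apply Finset.sum_le_sum; intro i _
  apply Finset.sum_le_sum; intro j _
  by_cases h : i = j
  · subst h
    simp only [Matrix.sub_apply, Matrix.diagonal_apply_eq, sub_self]
    nlinarith [sq_nonneg (E i i)]
  · simp [Matrix.sub_apply, Matrix.diagonal_apply_ne _ (fun hh => h hh), h]

private lemma offF_add_le' {n : ℕ} (M E : Matrix (Fin n) (Fin n) ℝ) :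
    offF (M + E) ≤ offF M + frobNorm E := by
  have h1 : offF (M + E) ≤ offF M + offF E := by
    rw [offF, offF, offF]
    have key : (M + E) - Matrix.diagonal (fun i => (M + E) i i)
        = (M - Matrix.diagonal fun i => M i i) + (E - Matrix.diagonal fun i => E i i) := by
      ext i j
      by_cases h : i = j
      · subst h; simp [Matrix.diagonal_apply_eq]
      · simp [Matrix.diagonal_apply_ne _ (fun hh => h hh), h]
    rw [key]
    exact frobNorm_add_le' _ _
  exact h1.trans (by linarith [offF_le_frobNorm' E])

/-- Lemma 4.2: a QR factorization after preconditioning keeps the `off`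
quantity small. -/
theorem off_after_qr
    {m n : ℕ}
    (A ΔA : Matrix (Fin m) (Fin n) ℝ)
    (γ : ℝ) (hγ0 : 0 ≤ γ) (hγ1 : γ ≤ 1)
    (Q : Matrix (Fin m) (Fin m) ℝ) (R : Matrix (Fin m) (Fin n) ℝ)
    (hQ : Qᵀ * Q = 1)
    (hfact : A + ΔA = Q * R)
    (hcols : ∀ j, vecNorm (fun i => ΔA i j) ≤ γ * vecNorm (fun i => A i j)) :
    offF (Rᵀ * R) ≤ offF (Aᵀ * A) + 3 * (n : ℝ) ^ ((3 : ℝ) / 2) * γ * frobNorm (Aᵀ * A) := by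
  rcases Nat.eq_zero_or_pos n with hn | hn
  · subst hn
    simp [offF, frobNorm, Finset.univ_eq_empty]
  set E : Matrix (Fin n) (Fin n) ℝ := Aᵀ * ΔA + ΔAᵀ * A + ΔAᵀ * ΔA with hE
  have hR : Rᵀ * R = Aᵀ * A + E := by
    have h1 : Rᵀ * R = (A + ΔA)ᵀ * (A + ΔA) := by
      rw [hfact, Matrix.transpose_mul, Matrix.mul_assoc, ← Matrix.mul_assoc Qᵀ, hQ,
        Matrix.one_mul]
    rw [h1, Matrix.transpose_add, Matrix.add_mul, Matrix.mul_add, Matrix.mul_add, hE]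
    abel
  set nA : Fin n → ℝ := fun j => vecNorm (fun i => A i j) with hnA
  have hnA0 : ∀ j, 0 ≤ nA j := fun j => vecNorm_nonneg' _
  have hEntry : ∀ i j, |E i j| ≤ 3 * γ * (nA i * nA j) := by
    intro i j
    have e1 : |(Aᵀ * ΔA) i j| ≤ nA i * (γ * nA j) := by
      calc |(Aᵀ * ΔA) i j| = |∑ k, A k i * ΔA k j| := by
            simp [Matrix.mul_apply, Matrix.transpose_apply]
        _ ≤ vecNorm (fun k => A k i) * vecNorm (fun k => ΔA k j) := abs_sum_mul_le' _ _
        _ ≤ nA i * (γ * nA j) := mul_le_mul_of_nonneg_left (hcols j) (hnA0 i)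
    have e2 : |(ΔAᵀ * A) i j| ≤ (γ * nA i) * nA j := by
      calc |(ΔAᵀ * A) i j| = |∑ k, ΔA k i * A k j| := by
            simp [Matrix.mul_apply, Matrix.transpose_apply]
        _ ≤ vecNorm (fun k => ΔA k i) * vecNorm (fun k => A k j) := abs_sum_mul_le' _ _
        _ ≤ (γ * nA i) * nA j := mul_le_mul_of_nonneg_right (hcols i) (vecNorm_nonneg' _)
    have e3 : |(ΔAᵀ * ΔA) i j| ≤ (γ * nA i) * (γ * nA j) := by
      calc |(ΔAᵀ * ΔA) i j| = |∑ k, ΔA k i * ΔA k j| := by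
            simp [Matrix.mul_apply, Matrix.transpose_apply]
        _ ≤ vecNorm (fun k => ΔA k i) * vecNorm (fun k => ΔA k j) := abs_sum_mul_le' _ _
        _ ≤ (γ * nA i) * (γ * nA j) :=
            mul_le_mul (hcols i) (hcols j) (vecNorm_nonneg' _) (mul_nonneg hγ0 (hnA0 i))
    have habs : |E i j| ≤ |(Aᵀ * ΔA) i j| + |(ΔAᵀ * A) i j| + |(ΔAᵀ * ΔA) i j| := by
      have : E i j = (Aᵀ * ΔA) i j + (ΔAᵀ * A) i j + (ΔAᵀ * ΔA) i j := by
        rw [hE]; simp [Matrix.add_apply]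
      rw [this]
      have t1 := abs_add_le ((Aᵀ * ΔA) i j + (ΔAᵀ * A) i j) ((ΔAᵀ * ΔA) i j)
      have t2 := abs_add_le ((Aᵀ * ΔA) i j) ((ΔAᵀ * A) i j)
      linarith
    nlinarith [hnA0 i, hnA0 j, mul_nonneg (hnA0 i) (hnA0 j),
      mul_nonneg (mul_nonneg (sub_nonneg.2 hγ1) hγ0) (mul_nonneg (hnA0 i) (hnA0 j))]
  have hfrobE : frobNorm E ≤ 3 * γ * ∑ j, nA j ^ 2 := by
    have h1 : frobNorm E ≤ Real.sqrt (∑ i, ∑ j, (3 * γ * (nA i * nA j)) ^ 2) :=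
      frobNorm_le_sqrt' _ _ hEntry
    have h2 : ∑ i, ∑ j, (3 * γ * (nA i * nA j)) ^ 2 = (3 * γ * ∑ j, nA j ^ 2) ^ 2 := by
      have h3 : (3 * γ * ∑ j, nA j ^ 2) ^ 2
          = (3 * γ) ^ 2 * ((∑ i, nA i ^ 2) * (∑ j, nA j ^ 2)) := by ring
      rw [h3, Finset.sum_mul_sum, Finset.mul_sum]
      apply Finset.sum_congr rfl; intro i _
      rw [Finset.mul_sum]
      apply Finset.sum_congr rfl; intro j _
      ring
    rw [h2, Real.sqrt_sq (mul_nonneg (mul_nonneg (by norm_num) hγ0)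
      (Finset.sum_nonneg fun j _ => sq_nonneg _))] at h1
    exact h1
  have hsum : ∑ j, nA j ^ 2 ≤ Real.sqrt n * frobNorm (Aᵀ * A) := by
    have hd : ∀ j, nA j ^ 2 = (Aᵀ * A) j j := by
      intro j
      rw [hnA, vecNorm_sq']
      simp [Matrix.mul_apply, Matrix.transpose_apply, sq]
    have hcs : |∑ j, (1 : ℝ) * (Aᵀ * A) j j| ≤
        vecNorm (fun _ : Fin n => (1 : ℝ)) * vecNorm (fun j => (Aᵀ * A) j j) :=
      abs_sum_mul_le' _ _
    have hones : vecNorm (fun _ : Fin n => (1 : ℝ)) = Real.sqrt n := by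
      rw [vecNorm]; simp
    have hlast : vecNorm (fun j => (Aᵀ * A) j j) ≤ frobNorm (Aᵀ * A) := by
      rw [vecNorm, frobNorm]
      apply Real.sqrt_le_sqrt
      apply Finset.sum_le_sum; intro j _
      exact Finset.single_le_sum (f := fun k => ((Aᵀ * A) j k) ^ 2)
        (fun k _ => sq_nonneg _) (Finset.mem_univ j)
    calc ∑ j, nA j ^ 2 = ∑ j, (1 : ℝ) * (Aᵀ * A) j j := by
          apply Finset.sum_congr rfl; intro j _; rw [hd j, one_mul]
      _ ≤ |∑ j, (1 : ℝ) * (Aᵀ * A) j j| := le_abs_self _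
      _ ≤ vecNorm (fun _ : Fin n => (1 : ℝ)) * vecNorm (fun j => (Aᵀ * A) j j) := hcs
      _ ≤ Real.sqrt n * frobNorm (Aᵀ * A) := by
          rw [hones]
          exact mul_le_mul_of_nonneg_left hlast (Real.sqrt_nonneg _)
  have hrpow : Real.sqrt n ≤ (n : ℝ) ^ ((3 : ℝ) / 2) := by
    rw [Real.sqrt_eq_rpow]
    apply Real.rpow_le_rpow_of_exponent_le
    · exact_mod_cast hn
    · norm_num
  have hF0 : 0 ≤ frobNorm (Aᵀ * A) := frobNorm_nonneg' _
  have step : offF (Rᵀ * R) ≤ offF (Aᵀ * A) + frobNorm E := by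
    rw [hR]; exact offF_add_le' _ _
  have final : frobNorm E ≤ 3 * (n : ℝ) ^ ((3 : ℝ) / 2) * γ * frobNorm (Aᵀ * A) := by
    calc frobNorm E ≤ 3 * γ * ∑ j, nA j ^ 2 := hfrobE
      _ ≤ 3 * γ * (Real.sqrt n * frobNorm (Aᵀ * A)) :=
          mul_le_mul_of_nonneg_left hsum (by positivity)
      _ ≤ 3 * (n : ℝ) ^ ((3 : ℝ) / 2) * γ * frobNorm (Aᵀ * A) := by
          have := mul_le_mul_of_nonneg_left hrpow
            (mul_nonneg (mul_nonneg (by norm_num : (0:ℝ) ≤ 3) hγ0) hF0)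
          nlinarith
  linarith
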